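/- Let ω₀, ω₁, ω₂, q, H, R, σ be real numbers, and set v₁ := −H/4 and v₂ := (σ − R)/4. Let b be a C² real-valued function on a neighborhood of 0 in ℝ with b(0) = e^{−ω₀}, b'(0) = −(1/2)·ω₁·e^{−2ω₀}, and b''(0) = ((2/3)·ω₁² + (1/3)·q − (1/3)·ω₂)·e^{−3ω₀}. Then the limit as ε → 0⁺ of [ −(1/2)·ε^{−2}·b(ε)^{−2} − ε^{−1}·v₁·b(ε)^{−1} + v₂·log b(ε) + (1/2)·e^{2ω₀}·ε^{−2} + ((1/2)·ω₁ + v₁)·e^{ω₀}·ε^{−1} ] exists and equals −(1/8)·[ 2(σ − R)·ω₀ − H·ω₁ + (1/3)·(4ω₂ − 4q + ω₁²) ]. This identifies the pointwise integrand of the n = 2 renormalized-volume anomaly: V − V̂ = −(1/8)∫_Σ [2(|L̊|² − R)ω − Hω_r + (1/3)(4ω_{rr} − 4ω_iω^i + (ω_r)²)] dv_h. -/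

import Mathlib

open Topology Filter

private lemma stmt10_aux (A B C D L v x : ℝ) (hx : x ≠ 0) :
    (-(1/2) * A - v * x * B + C + D * x) / x ^ 2 + L
      = -(1/2) * (x ^ 2)⁻¹ * A - x⁻¹ * v * B + L + C * (x ^ 2)⁻¹ + D * x⁻¹ := by
  field_simp
  ring

set_option maxHeartbeats 1600000 in
/-- the pointwise integrand of the `n = 2` renormalized-volume anomaly:
with `v₁ = −H/4`, `v₂ = (σ − R)/4` and `b` having the stated 2-jet, the regularized
combination tends to `−⅛[2(σ − R)ω₀ − Hω₁ + ⅓(4ω₂ − 4q + ω₁²)]` as `ε → 0⁺`. -/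
theorem stmt10 (ω₀ ω₁ ω₂ q H R σ : ℝ) (v₁ v₂ : ℝ)
    (hv₁ : v₁ = -H / 4) (hv₂ : v₂ = (σ - R) / 4)
    (b : ℝ → ℝ) (U : Set ℝ) (hUo : IsOpen U) (hU0 : (0 : ℝ) ∈ U)
    (hb : ContDiffOn ℝ 2 b U)
    (hb0 : b 0 = Real.exp (-ω₀))
    (hb1 : deriv b 0 = -(1 / 2) * ω₁ * Real.exp (-2 * ω₀))
    (hb2 : deriv (deriv b) 0
      = ((2 / 3) * ω₁ ^ 2 + (1 / 3) * q - (1 / 3) * ω₂) * Real.exp (-3 * ω₀)) :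
    Filter.Tendsto (fun ε : ℝ =>
        -(1 / 2) * (ε ^ 2)⁻¹ * ((b ε) ^ 2)⁻¹ - ε⁻¹ * v₁ * (b ε)⁻¹ + v₂ * Real.log (b ε)
          + (1 / 2) * Real.exp (2 * ω₀) * (ε ^ 2)⁻¹
          + ((1 / 2) * ω₁ + v₁) * Real.exp ω₀ * ε⁻¹)
      (𝓝[>] 0)
      (𝓝 (-(1 / 8) * (2 * (σ - R) * ω₀ - H * ω₁
          + (1 / 3) * (4 * ω₂ - 4 * q + ω₁ ^ 2)))) := by
  -- Abbreviations
  set E : ℝ := Real.exp ω₀ with hE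
  have hEpos : (0 : ℝ) < E := Real.exp_pos _
  have hEne : E ≠ 0 := hEpos.ne'
  have e0 : Real.exp (-ω₀) = E⁻¹ := by rw [hE, Real.exp_neg]
  have e2 : Real.exp (-2 * ω₀) = (E⁻¹) ^ 2 := by
    rw [show (-2 * ω₀) = (2 : ℕ) * (-ω₀) by push_cast; ring, Real.exp_nat_mul, e0]
  have e3 : Real.exp (-3 * ω₀) = (E⁻¹) ^ 3 := by
    rw [show (-3 * ω₀) = (3 : ℕ) * (-ω₀) by push_cast; ring, Real.exp_nat_mul, e0]
  have e2p : Real.exp (2 * ω₀) = E ^ 2 := by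
    rw [show (2 * ω₀) = (2 : ℕ) * ω₀ by push_cast; ring, Real.exp_nat_mul]
  have hb0pos : 0 < b 0 := by rw [hb0]; exact Real.exp_pos _
  have hb0ne : b 0 ≠ 0 := hb0pos.ne'
  -- A neighbourhood of 0 where b is positive and everything is smooth
  set V : Set ℝ := U ∩ b ⁻¹' Set.Ioi 0 with hV
  have hVo : IsOpen V := hb.continuousOn.isOpen_inter_preimage hUo isOpen_Ioi
  have hV0 : (0 : ℝ) ∈ V := ⟨hU0, hb0pos⟩
  have hVU : V ⊆ U := Set.inter_subset_left
  have hbxpos : ∀ x ∈ V, 0 < b x := fun x hx => hx.2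
  -- Derivative facts
  have hb' : ContDiffOn ℝ 1 (deriv b) U := hb.deriv_of_isOpen hUo (by norm_num)
  have hdb : ∀ x ∈ V, HasDerivAt b (deriv b x) x := fun x hx =>
    ((hb.differentiableOn (by norm_num)).differentiableAt
      (hUo.mem_nhds (hVU hx))).hasDerivAt
  have hddb : ∀ x ∈ V, HasDerivAt (deriv b) (deriv (deriv b) x) x := fun x hx =>
    ((hb'.differentiableOn (by norm_num)).differentiableAt
      (hUo.mem_nhds (hVU hx))).hasDerivAt
  -- Continuity at 0
  have hc0 : ContinuousAt b 0 := hb.continuousOn.continuousAt (hUo.mem_nhds hU0)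
  have hc1 : ContinuousAt (deriv b) 0 :=
    hb'.continuousOn.continuousAt (hUo.mem_nhds hU0)
  have hc2 : ContinuousAt (deriv (deriv b)) 0 :=
    (hb'.deriv_of_isOpen (m := 0) hUo (by norm_num)).continuousOn.continuousAt (hUo.mem_nhds hU0)
  -- The functions h, h1, h2
  set h : ℝ → ℝ := fun x =>
    -(1/2) * ((b x) ^ 2)⁻¹ - v₁ * x * (b x)⁻¹ + (1/2) * Real.exp (2 * ω₀)
      + ((1/2) * ω₁ + v₁) * Real.exp ω₀ * x with hh
  set h1 : ℝ → ℝ := fun x =>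
    deriv b x * ((b x) ^ 3)⁻¹ - v₁ * (b x)⁻¹
      + v₁ * x * (deriv b x * ((b x) ^ 2)⁻¹) + ((1/2) * ω₁ + v₁) * Real.exp ω₀ with hh1
  set h2 : ℝ → ℝ := fun x =>
    deriv (deriv b) x * ((b x) ^ 3)⁻¹ - 3 * (deriv b x) ^ 2 * ((b x) ^ 4)⁻¹
      + 2 * (v₁ * (deriv b x * ((b x) ^ 2)⁻¹))
      + v₁ * x * (deriv (deriv b) x * ((b x) ^ 2)⁻¹
          - 2 * (deriv b x) ^ 2 * ((b x) ^ 3)⁻¹) with hh2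
  have hVev : ∀ᶠ x in 𝓝[>] (0:ℝ), x ∈ V :=
    Filter.Eventually.filter_mono nhdsWithin_le_nhds (hVo.eventually_mem hV0)
  -- HasDerivAt h = h1 on V
  have Hh : ∀ x ∈ V, HasDerivAt h (h1 x) x := by
    intro x hx
    have hbne : b x ≠ 0 := (hbxpos x hx).ne'
    have T := (((((hdb x hx).pow 2).inv (pow_ne_zero 2 hbne)).const_mul
        (-(1/2))).sub (((hasDerivAt_id x).const_mul v₁).mul
        ((hdb x hx).inv hbne))).add
        ((hasDerivAt_const x ((1/2) * Real.exp (2 * ω₀))).add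
          ((hasDerivAt_id x).const_mul (((1/2) * ω₁ + v₁) * Real.exp ω₀)))
    have heq : h = fun x => (-(1/2) * ((b x) ^ 2)⁻¹ - v₁ * x * (b x)⁻¹)
        + ((1/2) * Real.exp (2 * ω₀) + ((1/2) * ω₁ + v₁) * Real.exp ω₀ * x) := by
      funext y; simp only [hh]; ring
    rw [heq]
    convert T using 1
    · rfl
    · rfl
    · rfl
    simp only [hh1]
    simp only [Pi.pow_apply, Pi.inv_apply, Pi.mul_apply, id]
    field_simp
    ring
  -- HasDerivAt h1 = h2 on V
  have Hh1 : ∀ x ∈ V, HasDerivAt h1 (h2 x) x := by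
    intro x hx
    have hbne : b x ≠ 0 := (hbxpos x hx).ne'
    have T := ((((hddb x hx).mul (((hdb x hx).pow 3).inv
        (pow_ne_zero 3 hbne))).sub ((hdb x hx).inv hbne |>.const_mul v₁)).add
        ((((hasDerivAt_id x).const_mul v₁).mul ((hddb x hx).mul
          (((hdb x hx).pow 2).inv (pow_ne_zero 2 hbne)))).add
          (hasDerivAt_const x (((1/2) * ω₁ + v₁) * Real.exp ω₀))))
    have heq : h1 = fun x => (deriv b x * ((b x) ^ 3)⁻¹ - v₁ * (b x)⁻¹)
        + (v₁ * x * (deriv b x * ((b x) ^ 2)⁻¹)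
            + ((1/2) * ω₁ + v₁) * Real.exp ω₀) := by
      funext y; simp only [hh1]; ring
    rw [heq]
    convert T using 1
    · rfl
    · rfl
    · rfl
    simp only [hh2]
    simp only [Pi.pow_apply, Pi.inv_apply, Pi.mul_apply, id]
    field_simp
    ring
  -- h(0) = 0
  have hh0 : h 0 = 0 := by
    simp only [hh, hb0, e0, e2p]
    field_simp
    ring
  -- h1(0) = 0
  have hh10 : h1 0 = 0 := by
    simp only [hh1, hb0, hb1, hv₁, e0, e2]
    field_simp
    ring
  -- continuity of h, h1, h2 at 0
  have Ch : ContinuousAt h 0 :=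
    (((continuousAt_const.mul ((hc0.pow 2).inv₀ (pow_ne_zero 2 hb0ne))).sub
      ((continuousAt_const.mul continuousAt_id).mul (hc0.inv₀ hb0ne))).add
      continuousAt_const).add (continuousAt_const.mul continuousAt_id)
  have Ch1 : ContinuousAt h1 0 :=
    (((hc1.mul ((hc0.pow 3).inv₀ (pow_ne_zero 3 hb0ne))).sub
      (continuousAt_const.mul (hc0.inv₀ hb0ne))).add
      ((continuousAt_const.mul continuousAt_id).mul
        (hc1.mul ((hc0.pow 2).inv₀ (pow_ne_zero 2 hb0ne))))).add continuousAt_const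
  have Ch2 : ContinuousAt h2 0 :=
    (((hc2.mul ((hc0.pow 3).inv₀ (pow_ne_zero 3 hb0ne))).sub
      ((continuousAt_const.mul (hc1.pow 2)).mul
        ((hc0.pow 4).inv₀ (pow_ne_zero 4 hb0ne)))).add
      (continuousAt_const.mul (continuousAt_const.mul
        (hc1.mul ((hc0.pow 2).inv₀ (pow_ne_zero 2 hb0ne)))))).add
      ((continuousAt_const.mul continuousAt_id).mul
        ((hc2.mul ((hc0.pow 2).inv₀ (pow_ne_zero 2 hb0ne))).sub
          ((continuousAt_const.mul (hc1.pow 2)).mul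
            ((hc0.pow 3).inv₀ (pow_ne_zero 3 hb0ne)))))
  -- second L'Hôpital : h1 x / (2 x) → h2 0 / 2
  have L2 : Tendsto (fun x => h1 x / (2 * x)) (𝓝[>] (0:ℝ)) (𝓝 (h2 0 / 2)) := by
    apply HasDerivAt.lhopital_zero_nhdsGT
      (f' := h2) (g := fun x : ℝ => 2 * x) (g' := fun _ => (2:ℝ))
    · exact hVev.mono fun x hx => Hh1 x hx
    · exact Filter.Eventually.of_forall fun x => by
        simpa using (hasDerivAt_id x).const_mul (2:ℝ)
    · exact Filter.Eventually.of_forall fun x => two_ne_zero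
    · have := Ch1.tendsto.mono_left (nhdsWithin_le_nhds (s := Set.Ioi (0:ℝ)))
      rwa [hh10] at this
    · have : Tendsto (fun x : ℝ => 2 * x) (𝓝 (0:ℝ)) (𝓝 (2 * 0)) :=
        (continuousAt_const.mul continuousAt_id).tendsto
      simpa using this.mono_left (nhdsWithin_le_nhds (s := Set.Ioi (0:ℝ)))
    · exact (Ch2.tendsto.div_const 2).mono_left
        (nhdsWithin_le_nhds (s := Set.Ioi (0:ℝ)))
  -- first L'Hôpital : h x / x² → h2 0 / 2
  have L1 : Tendsto (fun x => h x / x ^ 2) (𝓝[>] (0:ℝ)) (𝓝 (h2 0 / 2)) := by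
    apply HasDerivAt.lhopital_zero_nhdsGT
      (f' := h1) (g := fun x : ℝ => x ^ 2) (g' := fun x => 2 * x)
    · exact hVev.mono fun x hx => Hh x hx
    · exact Filter.Eventually.of_forall fun x => by
        simpa using hasDerivAt_pow 2 x
    · filter_upwards [self_mem_nhdsWithin] with x hx
      exact mul_ne_zero two_ne_zero (ne_of_gt hx)
    · have := Ch.tendsto.mono_left (nhdsWithin_le_nhds (s := Set.Ioi (0:ℝ)))
      rwa [hh0] at this
    · have : Tendsto (fun x : ℝ => x ^ 2) (𝓝 (0:ℝ)) (𝓝 ((0:ℝ) ^ 2)) :=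
        (continuousAt_id.pow 2).tendsto
      simpa using this.mono_left (nhdsWithin_le_nhds (s := Set.Ioi (0:ℝ)))
    · exact L2
  -- log part
  have Llog : Tendsto (fun ε : ℝ => v₂ * Real.log (b ε)) (𝓝[>] (0:ℝ))
      (𝓝 (v₂ * Real.log (b 0))) :=
    ((continuousAt_const.mul (hc0.log hb0ne)).tendsto).mono_left
      (nhdsWithin_le_nhds (s := Set.Ioi (0:ℝ)))
  have Lsum := L1.add Llog
  clear_value E V h h1 h2
  -- identify the limit value
  have hval : h2 0 / 2 + v₂ * Real.log (b 0)
      = -(1 / 8) * (2 * (σ - R) * ω₀ - H * ω₁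
          + (1 / 3) * (4 * ω₂ - 4 * q + ω₁ ^ 2)) := by
    have hlog : Real.log (b 0) = -ω₀ := by rw [hb0, Real.log_exp]
    have hlogE : Real.log E = ω₀ := by rw [hE, Real.log_exp]
    simp only [hh2, hb0, hb1, hb2, hv₁, hv₂, hlog, e0, e2, e3, Real.log_inv, hlogE]
    field_simp
    ring
  rw [hval] at Lsum
  -- the stated expression agrees with h ε / ε² + v₂ log (b ε) for ε > 0
  refine Lsum.congr' ?_
  filter_upwards [self_mem_nhdsWithin] with ε hε
  have hεne : ε ≠ 0 := ne_of_gt hε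
  simp only [hh, hE]
  exact stmt10_aux _ _ _ _ _ _ _ hεne
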